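/- arXiv:2112.07524 — 3 statements merged into one kernel-verified Lean document; each statement's English description precedes it below -/
import Mathlib

section
/- If e = {x,y} is an edge of G whose endpoints x and y both have vertex-degree two and edge-degree two, then etw(G/e) ≤ etw(G), where G/e is the graph obtained by contracting e. -/
open Classical

/-- A finite loopless multigraph: a finite vertex type, a finite edge type, and an
endpoint function assigning to every edge an unordered pair of distinct vertices. -/
structure FinMGraph where
  V : Type
  E : Type
  [fV : Fintype V]
  [fE : Fintype E]
  [dV : DecidableEq V]
  ends : E → Sym2 V
  loopless : ∀ e, ¬ (ends e).IsDiag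

attribute [instance] FinMGraph.fV FinMGraph.fE FinMGraph.dV

namespace FinMGraph

variable (G : FinMGraph)

/-- One-step adjacency inside the vertex set `S` (i.e. in the induced subgraph `G[S]`). -/
def stepIn (S : Set G.V) (a b : G.V) : Prop :=
  a ∈ S ∧ b ∈ S ∧ ∃ e : G.E, G.ends e = s(a, b)

/-- The vertex set of the connected component of `v` in the induced subgraph `G[S]`. -/
def comp (S : Set G.V) (v : G.V) : Set G.V :=
  {w | Relation.ReflTransGen (G.stepIn S) v w}

/-- The number of edges (counted with multiplicity) with exactly one endpoint in `X`. -/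
noncomputable def cut (X : Set G.V) : ℕ :=
  Nat.card {e : G.E // ∃ a b, G.ends e = s(a, b) ∧ a ∈ X ∧ b ∉ X}

/-- For a layout `L` (a linear ordering of the vertices) the set `S_i` of vertices
occurring at position `i` or later. -/
def tail (L : Fin (Fintype.card G.V) ≃ G.V) (i : Fin (Fintype.card G.V)) : Set G.V :=
  {v | i ≤ L.symm v}

/-- The cost `δ^ec(i) = |E_G(C_G(S_i, x_i))|` of position `i` in the layout `L`. -/
noncomputable def cost (L : Fin (Fintype.card G.V) ≃ G.V) (i : Fin (Fintype.card G.V)) : ℕ :=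
  G.cut (G.comp (G.tail L i) (L i))

/-- The edge-treewidth of `G`: the minimum over all layouts of the maximum cost. -/
noncomputable def etw : ℕ :=
  sInf {k | ∃ L : Fin (Fintype.card G.V) ≃ G.V, ∀ i, G.cost L i ≤ k}

end FinMGraph

namespace FinMGraph

variable (G : FinMGraph)

/-- `G` is a forest: every edge is a bridge, i.e. after removing an edge its two
endpoints are no longer connected. -/
def IsForest : Prop :=
  ∀ (e : G.E) (a b : G.V), G.ends e = s(a, b) →
    ¬ Relation.ReflTransGen (fun x y => ∃ f : G.E, f ≠ e ∧ G.ends f = s(x, y)) a b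

/-- A cycle of length `k` in `G`, given by an injective cyclic sequence of vertices and an
injective sequence of distinct edges joining consecutive vertices. -/
def IsCycleOn (k : ℕ) (v : ZMod k → G.V) (f : ZMod k → G.E) : Prop :=
  2 ≤ k ∧ Function.Injective v ∧ Function.Injective f ∧
    ∀ i : ZMod k, G.ends (f i) = s(v i, v (i + 1))

/-- `G` is a cactus: every edge belongs to at most one cycle, i.e. any two cycles
sharing an edge have the same edge set. -/
def IsCactus : Prop :=
  ∀ (k₁ : ℕ) (v₁ : ZMod k₁ → G.V) (f₁ : ZMod k₁ → G.E)
    (k₂ : ℕ) (v₂ : ZMod k₂ → G.V) (f₂ : ZMod k₂ → G.E),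
    G.IsCycleOn k₁ v₁ f₁ → G.IsCycleOn k₂ v₂ f₂ →
    (∃ e, e ∈ Set.range f₁ ∧ e ∈ Set.range f₂) → Set.range f₁ = Set.range f₂

/-- A walk from `a` to `b` using the listed edges, in order. -/
inductive Walk : G.V → G.V → List G.E → Prop
  | nil (v : G.V) : Walk v v []
  | cons {a b c : G.V} {e : G.E} {es : List G.E} :
      G.ends e = s(a, b) → Walk b c es → Walk a c (e :: es)

/-- `H` is a subgraph of `G`. -/
def IsSubgraphOf (H : FinMGraph) : Prop :=
  ∃ (φ : H.V ↪ G.V) (ψ : H.E ↪ G.E), ∀ e, G.ends (ψ e) = (H.ends e).map φ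

/-- The edge-degree of `v`: the number of incident edges, counted with multiplicity. -/
noncomputable def edeg (v : G.V) : ℕ :=
  Nat.card {e : G.E // v ∈ G.ends e}

/-- The vertex-degree of `v`: the number of distinct neighbours of `v`. -/
noncomputable def vdeg (v : G.V) : ℕ :=
  Nat.card {w : G.V // w ≠ v ∧ ∃ e : G.E, G.ends e = s(v, w)}

/-- `H` is obtained from `G` by contracting one edge `e = {x,y}` whose endpoints both
have vertex-degree two and edge-degree two. -/
def ContractStep (H : FinMGraph) : Prop :=
  ∃ (x y : G.V) (e : G.E), G.ends e = s(x, y) ∧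
    G.vdeg x = 2 ∧ G.edeg x = 2 ∧ G.vdeg y = 2 ∧ G.edeg y = 2 ∧
    ∃ (φ : G.V → H.V) (ψ : {f : G.E // f ≠ e} ≃ H.E),
      Function.Surjective φ ∧
      (∀ v w : G.V, φ v = φ w ↔ (v = w ∨ (v = x ∧ w = y) ∨ (v = y ∧ w = x))) ∧
      ∀ f : {f : G.E // f ≠ e}, H.ends (ψ f) = (G.ends f.1).map φ

/-- `H` is a weak topological minor of `G`: `H` is obtained from a subgraph of `G` by
repeatedly contracting edges whose endpoints have vertex-degree two and edge-degree two. -/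
def IsWeakTopMinorOf (H G : FinMGraph) : Prop :=
  ∃ S : FinMGraph, S.IsSubgraphOf G ∧ Relation.ReflTransGen FinMGraph.ContractStep S H

/-- The induced subgraph `G[S]` is connected. -/
def ConnectedOn (S : Set G.V) : Prop :=
  ∀ a ∈ S, ∀ b ∈ S, Relation.ReflTransGen (G.stepIn S) a b

/-- `G` is connected. -/
def Connected : Prop := G.ConnectedOn Set.univ

/-- `G` is biconnected: nonempty and removing any single vertex leaves it connected. -/
def Biconnected : Prop :=
  Nonempty G.V ∧ ∀ v : G.V, G.ConnectedOn {w | w ≠ v}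

/-- The minimum cost over layouts whose first vertex is `u`. -/
noncomputable def etwFrom (u : G.V) : ℕ :=
  sInf {k | ∃ L : Fin (Fintype.card G.V) ≃ G.V, (L.symm u : ℕ) = 0 ∧ ∀ i, G.cost L i ≤ k}

/-- The sub-multigraph of `G` on the same vertex set whose edges are those in `F`. -/
noncomputable def restrictE (F : Set G.E) : FinMGraph :=
  { V := G.V, E := {e : G.E // e ∈ F}, ends := fun e => G.ends e.1,
    loopless := fun e => G.loopless e.1 }

/-- Two edges lie in a common block: they are equal or some cycle contains both. -/
def SameBlock (e f : G.E) : Prop :=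
  e = f ∨ ∃ (k : ℕ) (v : ZMod k → G.V) (g : ZMod k → G.E),
    G.IsCycleOn k v g ∧ e ∈ Set.range g ∧ f ∈ Set.range g

/-- The block of `G` containing the edge `e`. -/
noncomputable def blockOf (e : G.E) : FinMGraph :=
  G.restrictE {f | G.SameBlock e f}

/-- The number of vertices outside `X` having a neighbour in `X`. -/
noncomputable def ncut (X : Set G.V) : ℕ :=
  Nat.card {v : G.V // v ∉ X ∧ ∃ x ∈ X, ∃ e : G.E, G.ends e = s(v, x)}

/-- Treewidth, via its layout characterization: the minimum over layouts of the
maximum of `|N_G(C_G(S_i, x_i))|`. -/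
noncomputable def twl : ℕ :=
  sInf {k | ∃ L : Fin (Fintype.card G.V) ≃ G.V,
    ∀ i, G.ncut (G.comp (G.tail L i) (L i)) ≤ k}

/-- The maximum edge-degree of `G`. -/
noncomputable def maxEdeg : ℕ :=
  sSup {m | ∃ v : G.V, m = G.edeg v}

end FinMGraph

/-- A tree-layout of `G`: a rooted tree (given by a parent function under which every
node eventually reaches the root) together with an injective mapping `τ` of the vertices
of `G` into the nodes such that the endpoints of every edge are mapped to comparable
(ancestor/descendant) nodes. -/
structure TreeLayout (G : FinMGraph) where
  T : Type
  par : T → T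
  root : T
  par_root : par root = root
  reaches_root : ∀ t : T, ∃ n : ℕ, par^[n] t = root
  τ : G.V → T
  inj : Function.Injective τ
  comparable : ∀ (e : G.E) (a b : G.V), G.ends e = s(a, b) →
    (∃ n : ℕ, par^[n] (τ a) = τ b) ∨ (∃ n : ℕ, par^[n] (τ b) = τ a)

/-- The set `X_T(u)` of vertices of `G` mapped to descendants of the node `u`. -/
def TreeLayout.region {G : FinMGraph} (TL : TreeLayout G) (u : TL.T) : Set G.V :=
  {x | ∃ n : ℕ, TL.par^[n] (TL.τ x) = u}

/-- The theta graph `θ k`: two vertices joined by `k` parallel edges. -/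
def theta (k : ℕ) : FinMGraph :=
  { V := Fin 2, E := Fin k, ends := fun _ => s((0 : Fin 2), 1),
    loopless := fun _ => by rw [Sym2.mk_isDiag_iff]; decide }

/-- The cycle on `n ≥ 2` vertices. -/
def cyc (n : ℕ) (h : 2 ≤ n) : FinMGraph :=
  letI : NeZero n := ⟨by omega⟩
  letI : Fact (1 < n) := ⟨h⟩
  { V := ZMod n, E := ZMod n, ends := fun i => s(i, i + 1),
    loopless := fun i => by
      rw [Sym2.mk_isDiag_iff]
      exact fun hh => one_ne_zero (left_eq_add.mp hh) }

/-- The multigraph `Z_n^3`, obtained from the cycle on `n ≥ 2` vertices by doubling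
every edge. -/
def Z3 (n : ℕ) (h : 2 ≤ n) : FinMGraph :=
  letI : NeZero n := ⟨by omega⟩
  letI : Fact (1 < n) := ⟨h⟩
  { V := ZMod n, E := ZMod n × Fin 2, ends := fun p => s(p.1, p.1 + 1),
    loopless := fun p => by
      rw [Sym2.mk_isDiag_iff]
      exact fun hh => one_ne_zero (left_eq_add.mp hh) }

namespace FinMGraph

private lemma sym2_cases {α : Type*} (z : Sym2 α) : ∃ a b, z = s(a, b) :=
  Sym2.ind (fun a b => ⟨a, b, rfl⟩) z

private lemma comp_subset (G : FinMGraph) (S : Set G.V) (v : G.V) (hv : v ∈ S) :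
    ∀ a ∈ G.comp S v, a ∈ S := by
  intro a ha
  rcases Relation.ReflTransGen.cases_tail ha with h | ⟨c, _, hc⟩
  · exact h ▸ hv
  · exact hc.2.1

private lemma key (G H : FinMGraph) (x y : G.V) (e : G.E)
    (hxy : G.ends e = s(x, y))
    (hey : G.edeg y = 2)
    (φ : G.V → H.V) (ψ : {f : G.E // f ≠ e} ≃ H.E)
    (hsurj : Function.Surjective φ)
    (hiff : ∀ v w : G.V, φ v = φ w ↔ (v = w ∨ (v = x ∧ w = y) ∨ (v = y ∧ w = x)))
    (hends : ∀ f : {f : G.E // f ≠ e}, H.ends (ψ f) = (G.ends f.1).map φ)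
    (L : Fin (Fintype.card G.V) ≃ G.V) (k : ℕ)
    (hcost : ∀ i, G.cost L i ≤ k)
    (hlt : L.symm x < L.symm y) :
    ∃ L' : Fin (Fintype.card H.V) ≃ H.V, ∀ i, H.cost L' i ≤ k := by
  classical
  have hxne : x ≠ y := fun h => G.loopless e (by rw [hxy]; exact Sym2.mk_isDiag_iff.mpr h)
  have hφyx : φ y = φ x := (hiff y x).2 (Or.inr (Or.inr ⟨rfl, rfl⟩))
  have hsplit : ∀ (z : Sym2 G.V) (a' b' : H.V), z.map φ = s(a', b') →
      ∃ c d, z = s(c, d) ∧ φ c = a' ∧ φ d = b' := by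
    intro z a' b' hmapz
    obtain ⟨c0, d0, rfl⟩ := sym2_cases z
    rw [Sym2.map_pair_eq] at hmapz
    rcases Sym2.eq_iff.1 hmapz with ⟨h1, h2⟩ | ⟨h1, h2⟩
    · exact ⟨c0, d0, rfl, h1, h2⟩
    · exact ⟨d0, c0, Sym2.eq_swap, h2, h1⟩
  set p : Fin (Fintype.card G.V) := L.symm y with hp
  have hbij : Function.Bijective (fun v : {v : G.V // v ≠ y} => φ v.1) := by
    constructor
    · rintro ⟨a, ha⟩ ⟨b, hb⟩ h
      simp only at h
      rcases (hiff a b).1 h with h | ⟨h1, h2⟩ | ⟨h1, h2⟩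
      · exact Subtype.ext h
      · exact absurd h2 hb
      · exact absurd h1 ha
    · intro w
      obtain ⟨v, rfl⟩ := hsurj w
      by_cases hv : v = y
      · exact ⟨⟨x, hxne⟩, by simp [hv, hφyx.symm]⟩
      · exact ⟨⟨v, hv⟩, rfl⟩
  let ρ : {v : G.V // v ≠ y} ≃ H.V := Equiv.ofBijective _ hbij
  let e2 : {v : G.V // v ≠ y} ≃ {i : Fin (Fintype.card G.V) // i ≠ p} :=
    L.symm.subtypeEquiv (fun v => not_congr (by rw [hp]; exact (Equiv.apply_eq_iff_eq L.symm).symm))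
  have hcard : Fintype.card {i : Fin (Fintype.card G.V) // i ≠ p} = Fintype.card H.V :=
    Fintype.card_congr (e2.symm.trans ρ)
  let σ : Fin (Fintype.card H.V) ≃o {i : Fin (Fintype.card G.V) // i ≠ p} :=
    monoEquivOfFin _ hcard
  let L' : Fin (Fintype.card H.V) ≃ H.V := σ.toEquiv.trans (e2.symm.trans ρ)
  refine ⟨L', fun i => ?_⟩
  have hjp : ((σ i : {i' : Fin (Fintype.card G.V) // i' ≠ p}) : Fin (Fintype.card G.V)) ≠ p := (σ i).2
  set j : Fin (Fintype.card G.V) := ((σ i : {i' : Fin (Fintype.card G.V) // i' ≠ p}) : Fin (Fintype.card G.V)) with hj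
  set v : G.V := L j with hv
  have hvy : v ≠ y := by
    intro h
    apply hjp
    rw [hp, ← h, hv, Equiv.symm_apply_apply]
  have hσi : (σ i : {i' : Fin (Fintype.card G.V) // i' ≠ p}) = ⟨j, hjp⟩ := rfl
  have he2v : e2 ⟨v, hvy⟩ = ⟨j, hjp⟩ := by
    apply Subtype.ext
    show L.symm v = j
    rw [hv, Equiv.symm_apply_apply]
  have hL'i : L' i = φ v := by
    show ρ (e2.symm (σ i)) = φ v
    rw [hσi, ← he2v, Equiv.symm_apply_apply]
    rfl
  have hmemS' : ∀ (a : G.V), a ≠ y → (φ a ∈ H.tail L' i ↔ a ∈ G.tail L j) := by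
    intro a ha
    have h1 : L'.symm (φ a) = σ.symm (e2 ⟨a, ha⟩) := by
      show (σ.toEquiv.trans (e2.symm.trans ρ)).symm (φ a) = _
      have h2 : ρ ⟨a, ha⟩ = φ a := rfl
      rw [← h2]
      simp [Equiv.symm_apply_eq]
    show i ≤ L'.symm (φ a) ↔ j ≤ L.symm a
    rw [h1, OrderIso.le_symm_apply, hσi]
    exact Subtype.mk_le_mk
  have hvS : v ∈ G.tail L j := by
    show j ≤ L.symm v
    rw [hv, Equiv.symm_apply_apply]
  have hCS := G.comp_subset _ v hvS
  suffices hle : H.cut (H.comp (H.tail L' i) (φ v)) ≤ G.cut (G.comp (G.tail L j) v) by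
    have h1 : H.cost L' i = H.cut (H.comp (H.tail L' i) (φ v)) := by rw [cost, hL'i]
    have h2 : G.cost L j = G.cut (G.comp (G.tail L j) v) := rfl
    rw [h1]
    exact le_trans hle (h2 ▸ hcost j)
  by_cases hxS : x ∈ G.tail L j
  -- CASE 1 : x ∈ S
  · have hyS : y ∈ G.tail L j := le_trans hxS (le_of_lt hlt)
    have hstepxy : G.stepIn (G.tail L j) x y := ⟨hxS, hyS, e, hxy⟩
    have hstepyx : G.stepIn (G.tail L j) y x := ⟨hyS, hxS, e, by rw [hxy]; exact Sym2.eq_swap⟩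
    have hxyC : ∀ a ∈ G.comp (G.tail L j) v, (a = x ∨ a = y) →
        x ∈ G.comp (G.tail L j) v ∧ y ∈ G.comp (G.tail L j) v := by
      rintro a ha (rfl | rfl)
      · exact ⟨ha, Relation.ReflTransGen.tail ha hstepxy⟩
      · exact ⟨Relation.ReflTransGen.tail ha hstepyx, ha⟩
    have hS'mem : ∀ a : G.V, a ∈ G.tail L j → φ a ∈ H.tail L' i := by
      intro a ha
      by_cases hay : a = y
      · subst hay; rw [hφyx]; exact (hmemS' x hxne).2 hxS
      · exact (hmemS' a hay).2 ha
    have himg : ∀ c : G.V, (∃ a ∈ G.comp (G.tail L j) v, φ a = φ c) →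
        c ∈ G.comp (G.tail L j) v := by
      rintro c ⟨a, ha, hac⟩
      rcases (hiff a c).1 hac with rfl | ⟨rfl, rfl⟩ | ⟨rfl, rfl⟩
      · exact ha
      · exact (hxyC _ ha (Or.inl rfl)).2
      · exact (hxyC _ ha (Or.inr rfl)).1
    have hback : ∀ a ∈ G.comp (G.tail L j) v, φ a ∈ H.comp (H.tail L' i) (φ v) := by
      intro a ha
      have ha' : Relation.ReflTransGen (G.stepIn (G.tail L j)) v a := ha
      clear ha
      induction ha' with
      | refl => exact Relation.ReflTransGen.refl
      | @tail b c hab hbc ih =>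
        obtain ⟨hbS, hcS, f, hf⟩ := hbc
        by_cases hfe : f = e
        · subst hfe
          rw [hxy] at hf
          rcases Sym2.eq_iff.1 hf with ⟨h1, h2⟩ | ⟨h1, h2⟩
          · rw [← h2, hφyx, h1]; exact ih
          · rw [← h1, ← hφyx, h2]; exact ih
        · exact Relation.ReflTransGen.tail ih
            ⟨hS'mem b hbS, hS'mem c hcS, ψ ⟨f, hfe⟩, by rw [hends, hf, Sym2.map_pair_eq]⟩
    have hcomp1 : ∀ w', w' ∈ H.comp (H.tail L' i) (φ v) ↔
        ∃ a ∈ G.comp (G.tail L j) v, φ a = w' := by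
      intro w'
      constructor
      · intro hw
        have hw' : Relation.ReflTransGen (H.stepIn (H.tail L' i)) (φ v) w' := hw
        clear hw
        induction hw' with
        | refl => exact ⟨v, Relation.ReflTransGen.refl, rfl⟩
        | @tail b' c' hab hbc ih =>
          obtain ⟨a, haC, hfa⟩ := ih
          obtain ⟨hbS', hcS', e', he'⟩ := hbc
          obtain ⟨f, rfl⟩ := ψ.surjective e'
          rw [hends] at he'
          obtain ⟨c, d, hcd, h1, h2⟩ := hsplit _ _ _ he'
          have hcC : c ∈ G.comp (G.tail L j) v := himg c ⟨a, haC, hfa.trans h1.symm⟩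
          have hφd : φ d ∈ H.tail L' i := by rw [h2]; exact hcS'
          have hdS : d ∈ G.tail L j := by
            by_cases hdy : d = y
            · exact hdy ▸ hyS
            · exact (hmemS' d hdy).1 hφd
          exact ⟨d, Relation.ReflTransGen.tail hcC ⟨hCS c hcC, hdS, f.1, hcd⟩, h2⟩
      · rintro ⟨a, ha, rfl⟩; exact hback a ha
    have hcross : ∀ (e' : H.E),
        (∃ a b, H.ends e' = s(a, b) ∧ a ∈ H.comp (H.tail L' i) (φ v) ∧
          b ∉ H.comp (H.tail L' i) (φ v)) →
        ∃ a b, G.ends (ψ.symm e').1 = s(a, b) ∧ a ∈ G.comp (G.tail L j) v ∧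
          b ∉ G.comp (G.tail L j) v := by
      rintro e' ⟨a', b', he', ha', hb'⟩
      rw [← ψ.apply_symm_apply e', hends] at he'
      obtain ⟨c, d, hcd, h1, h2⟩ := hsplit _ _ _ he'
      obtain ⟨a, haC, hfa⟩ := (hcomp1 a').1 ha'
      refine ⟨c, d, hcd, himg c ⟨a, haC, hfa.trans h1.symm⟩, fun hdC => hb' ?_⟩
      exact (hcomp1 b').2 ⟨d, hdC, h2⟩
    exact Nat.card_le_card_of_injective
      (fun q => ⟨(ψ.symm q.1).1, hcross q.1 q.2⟩)
      (fun q1 q2 h => by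
        have h' := Subtype.ext_iff.mp h
        exact Subtype.ext (ψ.symm.injective (Subtype.ext h')))
  -- CASE 2 : x ∉ S
  · have hvT : v ∈ G.tail L j \ {y} := ⟨hvS, hvy⟩
    have hC'T := G.comp_subset _ v hvT
    have hφxn : φ x ∉ H.tail L' i := fun h => hxS ((hmemS' x hxne).1 h)
    have hC'C : ∀ a ∈ G.comp (G.tail L j \ {y}) v, a ∈ G.comp (G.tail L j) v :=
      fun a ha => Relation.ReflTransGen.mono
        (fun a b hab => ⟨hab.1.1, hab.2.1.1, hab.2.2⟩) _ _ ha
    have hC'nxy : ∀ a ∈ G.comp (G.tail L j \ {y}) v, a ≠ x ∧ a ≠ y := by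
      intro a ha
      refine ⟨fun h => hxS (h ▸ (hC'T a ha).1), fun h => (hC'T a ha).2 h⟩
    have hS'T : ∀ a ∈ G.tail L j \ {y}, φ a ∈ H.tail L' i :=
      fun a ha => (hmemS' a ha.2).2 ha.1
    have himg2 : ∀ c : G.V, (∃ a ∈ G.comp (G.tail L j \ {y}) v, φ a = φ c) →
        c ∈ G.comp (G.tail L j \ {y}) v := by
      rintro c ⟨a, ha, hac⟩
      rcases (hiff a c).1 hac with rfl | ⟨h1, h2⟩ | ⟨h1, h2⟩
      · exact ha
      · exact absurd h1 (hC'nxy a ha).1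
      · exact absurd h1 (hC'nxy a ha).2
    have hback2 : ∀ a ∈ G.comp (G.tail L j \ {y}) v, φ a ∈ H.comp (H.tail L' i) (φ v) := by
      intro a ha
      have ha' : Relation.ReflTransGen (G.stepIn (G.tail L j \ {y})) v a := ha
      clear ha
      induction ha' with
      | refl => exact Relation.ReflTransGen.refl
      | @tail b c hab hbc ih =>
        obtain ⟨hbT, hcT, f, hf⟩ := hbc
        have hfe : f ≠ e := by
          intro h; subst h
          rw [hxy] at hf
          rcases Sym2.eq_iff.1 hf with ⟨h1, h2⟩ | ⟨h1, h2⟩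
          · exact hcT.2 h2.symm
          · exact hbT.2 h2.symm
        exact Relation.ReflTransGen.tail ih
          ⟨hS'T b hbT, hS'T c hcT, ψ ⟨f, hfe⟩, by rw [hends, hf, Sym2.map_pair_eq]⟩
    have hcomp2 : ∀ w', w' ∈ H.comp (H.tail L' i) (φ v) ↔
        ∃ a ∈ G.comp (G.tail L j \ {y}) v, φ a = w' := by
      intro w'
      constructor
      · intro hw
        have hw' : Relation.ReflTransGen (H.stepIn (H.tail L' i)) (φ v) w' := hw
        clear hw
        induction hw' with
        | refl => exact ⟨v, Relation.ReflTransGen.refl, rfl⟩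
        | @tail b' c' hab hbc ih =>
          obtain ⟨a, haC, hfa⟩ := ih
          obtain ⟨hbS', hcS', e', he'⟩ := hbc
          obtain ⟨f, rfl⟩ := ψ.surjective e'
          rw [hends] at he'
          obtain ⟨c, d, hcd, h1, h2⟩ := hsplit _ _ _ he'
          have hcC : c ∈ G.comp (G.tail L j \ {y}) v := himg2 c ⟨a, haC, hfa.trans h1.symm⟩
          have hφd : φ d ∈ H.tail L' i := by rw [h2]; exact hcS'
          have hdy : d ≠ y := by
            intro h
            exact hφxn (by rw [← hφyx, ← h]; exact hφd)
          have hdT : d ∈ G.tail L j \ {y} := ⟨(hmemS' d hdy).1 hφd, hdy⟩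
          exact ⟨d, Relation.ReflTransGen.tail hcC ⟨hC'T c hcC, hdT, f.1, hcd⟩, h2⟩
      · rintro ⟨a, ha, rfl⟩; exact hback2 a ha
    have huniq : ∀ f1 f2 : G.E, f1 ≠ e → f2 ≠ e → y ∈ G.ends f1 → y ∈ G.ends f2 → f1 = f2 := by
      intro f1 f2 h1 h2 hy1 hy2
      by_contra hne
      have hye : y ∈ G.ends e := by rw [hxy]; exact Sym2.mem_mk_right x y
      have c2 : (⟨f1, hy1⟩ : {f : G.E // y ∈ G.ends f}) ∉
          ({⟨f2, hy2⟩} : Finset {f : G.E // y ∈ G.ends f}) := by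
        simp only [Finset.mem_singleton, Subtype.ext_iff]
        exact hne
      have c1 : (⟨e, hye⟩ : {f : G.E // y ∈ G.ends f}) ∉
          ({⟨f1, hy1⟩, ⟨f2, hy2⟩} : Finset {f : G.E // y ∈ G.ends f}) := by
        simp only [Finset.mem_insert, Finset.mem_singleton, Subtype.ext_iff]
        push_neg
        exact ⟨fun hh => h1 hh.symm, fun hh => h2 hh.symm⟩
      have hcard3 : ({⟨e, hye⟩, ⟨f1, hy1⟩, ⟨f2, hy2⟩} :
          Finset {f : G.E // y ∈ G.ends f}).card = 3 := by
        rw [Finset.card_insert_of_notMem c1, Finset.card_insert_of_notMem c2,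
          Finset.card_singleton]
      have h3 : 3 ≤ Nat.card {f : G.E // y ∈ G.ends f} := by
        rw [Nat.card_eq_fintype_card, ← hcard3]
        exact Finset.card_le_univ _
      have h2' : Nat.card {f : G.E // y ∈ G.ends f} = 2 := hey
      omega
    have hcross2 : ∀ (e' : H.E),
        (∃ a b, H.ends e' = s(a, b) ∧ a ∈ H.comp (H.tail L' i) (φ v) ∧
          b ∉ H.comp (H.tail L' i) (φ v)) →
        ∃ c d, G.ends (ψ.symm e').1 = s(c, d) ∧ c ∈ G.comp (G.tail L j \ {y}) v ∧
          d ∉ G.comp (G.tail L j \ {y}) v := by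
      rintro e' ⟨a', b', he', ha', hb'⟩
      rw [← ψ.apply_symm_apply e', hends] at he'
      obtain ⟨c, d, hcd, h1, h2⟩ := hsplit _ _ _ he'
      obtain ⟨a, haC, hfa⟩ := (hcomp2 a').1 ha'
      refine ⟨c, d, hcd, himg2 c ⟨a, haC, hfa.trans h1.symm⟩, fun hdC => hb' ?_⟩
      exact (hcomp2 b').2 ⟨d, hdC, h2⟩
    set F : H.E → G.E := fun e' =>
      if y ∈ G.ends (ψ.symm e').1 ∧ y ∈ G.comp (G.tail L j) v then e else (ψ.symm e').1 with hF
    have hFcross : ∀ (e' : H.E),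
        (∃ a b, H.ends e' = s(a, b) ∧ a ∈ H.comp (H.tail L' i) (φ v) ∧
          b ∉ H.comp (H.tail L' i) (φ v)) →
        ∃ a b, G.ends (F e') = s(a, b) ∧ a ∈ G.comp (G.tail L j) v ∧
          b ∉ G.comp (G.tail L j) v := by
      intro e' he'
      obtain ⟨c, d, hcd, hcC', hdC'⟩ := hcross2 e' he'
      by_cases hcase : y ∈ G.ends (ψ.symm e').1 ∧ y ∈ G.comp (G.tail L j) v
      · rw [hF]; simp only [if_pos hcase]
        exact ⟨y, x, by rw [hxy]; exact Sym2.eq_swap, hcase.2, fun h => hxS (hCS x h)⟩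
      · rw [hF]; simp only [if_neg hcase]
        refine ⟨c, d, hcd, hC'C c hcC', fun hdC => ?_⟩
        by_cases hdy : d = y
        · exact hcase ⟨by rw [hcd, hdy]; exact Sym2.mem_mk_right c y, hdy ▸ hdC⟩
        · exact hdC' (Relation.ReflTransGen.tail hcC'
            ⟨hC'T c hcC', ⟨hCS d hdC, hdy⟩, (ψ.symm e').1, hcd⟩)
    have hFinj : ∀ e1 e2 : H.E, F e1 = F e2 → e1 = e2 := by
      intro e1 e2 h12
      have hpsne : ∀ e' : H.E, (ψ.symm e').1 ≠ e := fun e' => (ψ.symm e').2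
      have heq : ψ.symm e1 = ψ.symm e2 → e1 = e2 := by
        intro h
        rw [← ψ.apply_symm_apply e1, ← ψ.apply_symm_apply e2, h]
      rw [hF] at h12
      by_cases h1 : y ∈ G.ends (ψ.symm e1).1 ∧ y ∈ G.comp (G.tail L j) v
      · by_cases h2 : y ∈ G.ends (ψ.symm e2).1 ∧ y ∈ G.comp (G.tail L j) v
        · exact heq (Subtype.ext (huniq _ _ (hpsne e1) (hpsne e2) h1.1 h2.1))
        · simp only [if_pos h1, if_neg h2] at h12
          exact absurd h12.symm (hpsne e2)
      · by_cases h2 : y ∈ G.ends (ψ.symm e2).1 ∧ y ∈ G.comp (G.tail L j) v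
        · simp only [if_neg h1, if_pos h2] at h12
          exact absurd h12 (hpsne e1)
        · simp only [if_neg h1, if_neg h2] at h12
          exact heq (Subtype.ext h12)
    exact Nat.card_le_card_of_injective
      (fun q => ⟨F q.1, hFcross q.1 q.2⟩)
      (fun q1 q2 h => by
        have h' := Subtype.ext_iff.mp h
        exact Subtype.ext (hFinj q1.1 q2.1 h'))

end FinMGraph

/-- If `e = {x,y}` is an edge of `G` whose endpoints `x` and `y` both have
vertex-degree two and edge-degree two, then `etw(G/e) ≤ etw(G)`, where `G/e` is obtained
by contracting `e`. -/
theorem etw_contract_le (G H : FinMGraph) (h : G.ContractStep H) :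
    H.etw ≤ G.etw := by
  classical
  obtain ⟨x, y, e, hxy, hvx, hex, hvy, hey, φ, ψ, hsurj, hiff, hends⟩ := h
  have hne : {k | ∃ L : Fin (Fintype.card G.V) ≃ G.V, ∀ i, G.cost L i ≤ k}.Nonempty := by
    refine ⟨Fintype.card G.E, (Fintype.equivFin G.V).symm, fun i => ?_⟩
    calc G.cost (Fintype.equivFin G.V).symm i
        ≤ Nat.card G.E := Nat.card_le_card_of_injective Subtype.val Subtype.val_injective
      _ = Fintype.card G.E := Nat.card_eq_fintype_card
  have hmem : G.etw ∈ {k | ∃ L : Fin (Fintype.card G.V) ≃ G.V, ∀ i, G.cost L i ≤ k} :=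
    Nat.sInf_mem hne
  obtain ⟨L, hL⟩ := hmem
  have hxne : x ≠ y := fun hh => G.loopless e (by rw [hxy]; exact Sym2.mk_isDiag_iff.mpr hh)
  have hsymne : L.symm x ≠ L.symm y := fun hh => hxne (L.symm.injective hh)
  rcases lt_or_gt_of_ne hsymne with hlt | hgt
  · obtain ⟨L', hL'⟩ := FinMGraph.key G H x y e hxy hey φ ψ hsurj hiff hends L G.etw hL hlt
    exact Nat.sInf_le ⟨L', hL'⟩
  · have hxy' : G.ends e = s(y, x) := by rw [hxy]; exact Sym2.eq_swap
    have hiff' : ∀ v w : G.V, φ v = φ w ↔ (v = w ∨ (v = y ∧ w = x) ∨ (v = x ∧ w = y)) :=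
      fun v w => (hiff v w).trans (by tauto)
    obtain ⟨L', hL'⟩ := FinMGraph.key G H y x e hxy' hex φ ψ hsurj hiff' hends L G.etw hL hgt
    exact Nat.sInf_le ⟨L', hL'⟩
end

section
/- For every graph H, etw(H) ≤ tw(H) · Δ_e(H), where tw is treewidth and Δ_e is the maximum edge-degree. -/
open Classical

lemma FinMGraph.edeg_le_maxEdeg (G : FinMGraph) (v : G.V) : G.edeg v ≤ G.maxEdeg := by
  apply le_csSup
  · refine ⟨Fintype.card G.E, ?_⟩
    rintro m ⟨w, rfl⟩
    rw [FinMGraph.edeg, Nat.card_eq_fintype_card]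
    exact Fintype.card_subtype_le _
  · exact ⟨v, rfl⟩

lemma FinMGraph.cut_le_ncut_mul (G : FinMGraph) (X : Set G.V) :
    G.cut X ≤ G.ncut X * G.maxEdeg := by
  classical
  by_cases hE : IsEmpty G.E
  · have : G.cut X = 0 := by
      rw [FinMGraph.cut, Nat.card_eq_fintype_card]
      exact Fintype.card_eq_zero
    omega
  rw [not_isEmpty_iff] at hE
  have hV : Nonempty G.V := by
    obtain ⟨e⟩ := hE
    induction (G.ends e) using Sym2.ind with
    | _ a b => exact ⟨a⟩
  set P : G.E → Prop := fun e => ∃ a b, G.ends e = s(a, b) ∧ a ∈ X ∧ b ∉ X with hP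
  set Q : G.V → Prop := fun v => v ∉ X ∧ ∃ x ∈ X, ∃ e : G.E, G.ends e = s(v, x) with hQ
  set f : G.E → G.V := fun e =>
    if h : ∃ b, b ∉ X ∧ b ∈ G.ends e then h.choose else Classical.arbitrary G.V with hf
  have key : (Finset.univ.filter P).card ≤ G.maxEdeg * (Finset.univ.filter Q).card := by
    apply Finset.card_le_mul_card_image_of_maps_to (f := f)
    · intro e he
      rw [Finset.mem_filter] at he ⊢
      obtain ⟨-, a, b, hab, haX, hbX⟩ := he
      have hex : ∃ c, c ∉ X ∧ c ∈ G.ends e := ⟨b, hbX, by rw [hab]; exact Sym2.mem_mk_right a b⟩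
      have hspec := hex.choose_spec
      have hfe : f e = hex.choose := by simp [hf, hex]
      have hmem : f e ∈ G.ends e := hfe ▸ hspec.2
      have hfX : f e ∉ X := hfe ▸ hspec.1
      rw [hab, Sym2.mem_iff] at hmem
      rcases hmem with h1 | h1
      · exact absurd (h1 ▸ haX) hfX
      refine ⟨Finset.mem_univ _, hfX, a, haX, e, ?_⟩
      rw [hab, h1, Sym2.eq_swap]
    · intro v hv
      have hsub : (Finset.univ.filter P).filter (fun e => f e = v) ⊆
          Finset.univ.filter (fun e => v ∈ G.ends e) := by
        intro e he
        rw [Finset.mem_filter, Finset.mem_filter] at he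
        obtain ⟨⟨-, a, b, hab, haX, hbX⟩, hfev⟩ := he
        have hex : ∃ c, c ∉ X ∧ c ∈ G.ends e := ⟨b, hbX, by rw [hab]; exact Sym2.mem_mk_right a b⟩
        have hspec := hex.choose_spec
        have hfe : f e = hex.choose := by simp [hf, hex]
        rw [Finset.mem_filter]
        exact ⟨Finset.mem_univ _, hfev ▸ hfe ▸ hspec.2⟩
      calc ((Finset.univ.filter P).filter (fun e => f e = v)).card
          ≤ (Finset.univ.filter (fun e => v ∈ G.ends e)).card := Finset.card_le_card hsub
        _ = G.edeg v := by
            rw [FinMGraph.edeg, Nat.card_eq_fintype_card, Fintype.card_subtype]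
        _ ≤ G.maxEdeg := G.edeg_le_maxEdeg v
  have hcut : G.cut X = (Finset.univ.filter P).card := by
    rw [FinMGraph.cut, Nat.card_eq_fintype_card, Fintype.card_subtype]
  have hncut : G.ncut X = (Finset.univ.filter Q).card := by
    rw [FinMGraph.ncut, Nat.card_eq_fintype_card, Fintype.card_subtype]
  rw [hcut, hncut, mul_comm]
  exact key

/-- For every graph `H`, `etw(H) ≤ tw(H) · Δ_e(H)`, where `tw` is treewidth
(via its layout characterization) and `Δ_e` is the maximum edge-degree. -/
theorem etw_le_twl_mul_maxEdeg (H : FinMGraph) :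
    H.etw ≤ H.twl * H.maxEdeg := by
  have hne : {k | ∃ L : Fin (Fintype.card H.V) ≃ H.V,
      ∀ i, H.ncut (H.comp (H.tail L i) (L i)) ≤ k}.Nonempty := by
    refine ⟨Fintype.card H.V, (Fintype.equivFin H.V).symm, fun i => ?_⟩
    rw [FinMGraph.ncut, Nat.card_eq_fintype_card]
    exact Fintype.card_subtype_le _
  obtain ⟨L, hL⟩ := Nat.sInf_mem hne
  apply Nat.sInf_le
  exact ⟨L, fun i => le_trans (H.cut_le_ncut_mul _) (Nat.mul_le_mul_right _ (hL i))⟩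
end

section
/- The edge-treewidth of the multigraph Z_n^3 obtained from the n-cycle C_n (n ≥ 2) by doubling every edge equals 4. -/
open Classical

section AuxZ3

/-- The component is contained in the set, when the base vertex is in the set. -/
lemma FinMGraph.comp_subset_aux (G : FinMGraph) (S : Set G.V) (v : G.V) (hv : v ∈ S) :
    G.comp S v ⊆ S := by
  intro w hw
  induction hw with
  | refl => exact hv
  | tail _ hstep ih => exact hstep.2.1

lemma FinMGraph.comp_singleton_aux (G : FinMGraph) (v : G.V) :
    G.comp ({v} : Set G.V) v = {v} := by
  apply Set.Subset.antisymm
  · exact G.comp_subset_aux _ v rfl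
  · intro w hw
    rcases hw with rfl
    exact Relation.ReflTransGen.refl

/-- Upper bound on a cut in `Z3 n h`, when all crossing edges sit over `p` or `q`. -/
lemma Z3_cut_le_four (n : ℕ) (h : 2 ≤ n) (X : Set (Z3 n h).V) (p q : (Z3 n h).V)
    (hpq : ∀ e : (Z3 n h).E,
      (∃ a b, (Z3 n h).ends e = s(a, b) ∧ a ∈ X ∧ b ∉ X) → e.1 = p ∨ e.1 = q) :
    (Z3 n h).cut X ≤ 4 := by
  classical
  have hinj : Function.Injective
      (fun e : {e : (Z3 n h).E // ∃ a b, (Z3 n h).ends e = s(a, b) ∧ a ∈ X ∧ b ∉ X} =>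
        ((if e.1.1 = p then (0 : Fin 2) else 1), e.1.2)) := by
    rintro ⟨⟨x, jx⟩, hx⟩ ⟨⟨y, jy⟩, hy⟩ hxy
    simp only [Prod.mk.injEq] at hxy
    obtain ⟨h1, h2⟩ := hxy
    have hx' : x = p ∨ x = q := hpq ⟨x, jx⟩ hx
    have hy' : y = p ∨ y = q := hpq ⟨y, jy⟩ hy
    have hxey : x = y := by
      by_cases hxp : x = p <;> by_cases hyp : y = p
      · rw [hxp, hyp]
      · rw [if_pos hxp, if_neg hyp] at h1; exact absurd h1 (by decide)
      · rw [if_neg hxp, if_pos hyp] at h1; exact absurd h1 (by decide)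
      · rw [hx'.resolve_left hxp, hy'.resolve_left hyp]
    subst hxey
    subst h2
    rfl
  calc (Z3 n h).cut X
      = Nat.card {e : (Z3 n h).E // ∃ a b, (Z3 n h).ends e = s(a, b) ∧ a ∈ X ∧ b ∉ X} := rfl
    _ ≤ Nat.card (Fin 2 × Fin 2) := Nat.card_le_card_of_injective _ hinj
    _ = 4 := by simp

/-- Lower bound: the cut of a singleton in `Z3 n h` is at least 4. -/
lemma Z3_four_le_cut_singleton (n : ℕ) (h : 2 ≤ n) (v : ZMod n) :
    4 ≤ (Z3 n h).cut ({v} : Set (Z3 n h).V) := by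
  haveI : NeZero n := ⟨by omega⟩
  haveI : Fact (1 < n) := ⟨h⟩
  have hv1 : (v : ZMod n) + 1 ≠ v := fun hh => one_ne_zero (left_eq_add.mp hh.symm)
  have hv2 : (v : ZMod n) - 1 ≠ v := fun hh => one_ne_zero (sub_eq_self.mp hh)
  have key : ∀ x : ZMod n, x = v ∨ x = v - 1 →
      ∃ a b, s(x, x + 1) = s(a, b) ∧ a ∈ ({v} : Set (ZMod n)) ∧ b ∉ ({v} : Set (ZMod n)) := by
    rintro x (rfl | rfl)
    · exact ⟨x, x + 1, rfl, rfl, hv1⟩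
    · refine ⟨v, v - 1, ?_, rfl, hv2⟩
      rw [sub_add_cancel]
      exact Sym2.eq_swap
  let g : Fin 2 × Fin 2 →
      {e : (Z3 n h).E // ∃ a b, (Z3 n h).ends e = s(a, b) ∧ a ∈ ({v} : Set (Z3 n h).V)
        ∧ b ∉ ({v} : Set (Z3 n h).V)} :=
    fun kj => ⟨((if kj.1 = 0 then v else v - 1), kj.2), by
      apply key
      split <;> simp⟩
  have hginj : Function.Injective g := by
    rintro ⟨k, j⟩ ⟨k', j'⟩ hkj
    have h12 : (((if k = 0 then v else v - 1 : ZMod n), j) : (Z3 n h).E)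
        = ((if k' = 0 then v else v - 1), j') := congrArg Subtype.val hkj
    have h1 : (if k = 0 then v else v - 1 : ZMod n) = (if k' = 0 then v else v - 1) :=
      congrArg Prod.fst h12
    have h2 : j = j' := congrArg Prod.snd h12
    have hk : k = k' := by
      by_cases hk0 : k = 0 <;> by_cases hk0' : k' = 0
      · rw [hk0, hk0']
      · rw [if_pos hk0, if_neg hk0'] at h1; exact absurd h1.symm hv2
      · rw [if_neg hk0, if_pos hk0'] at h1; exact absurd h1 hv2
      · omega
    rw [hk, h2]
  calc (4 : ℕ) = Nat.card (Fin 2 × Fin 2) := by simp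
    _ ≤ _ := Nat.card_le_card_of_injective g hginj

end AuxZ3

/-- The edge-treewidth of the multigraph `Z_n^3` obtained from the `n`-cycle
(`n ≥ 2`) by doubling every edge equals 4. -/
theorem etw_Z3 (n : ℕ) (h : 2 ≤ n) : (Z3 n h).etw = 4 := by
  haveI : NeZero n := ⟨by omega⟩
  haveI : Fact (1 < n) := ⟨h⟩
  have cardV : Fintype.card (Z3 n h).V = n := ZMod.card n
  -- the natural layout
  let E0 : Fin n ≃ ZMod n :=
    { toFun := fun i => ((i.val : ℕ) : ZMod n)
      invFun := fun v => ⟨v.val, ZMod.val_lt v⟩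
      left_inv := fun i => Fin.ext (ZMod.val_cast_of_lt i.isLt)
      right_inv := fun v => ZMod.natCast_rightInverse v }
  let L : Fin (Fintype.card (Z3 n h).V) ≃ (Z3 n h).V := (finCongr cardV).trans E0
  have hL : ∀ i, L i = (((i : ℕ) : ℕ) : ZMod n) := fun i => rfl
  have hLsymm : ∀ v : ZMod n, ((L.symm v : Fin _) : ℕ) = v.val := fun v => rfl
  have htail : ∀ (i : Fin (Fintype.card (Z3 n h).V)) (v : ZMod n),
      v ∈ (Z3 n h).tail L i ↔ (i : ℕ) ≤ v.val := by
    intro i v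
    change i ≤ L.symm v ↔ _
    rw [Fin.le_def, hLsymm]
  -- tail sets are connected
  have reach : ∀ (i : Fin (Fintype.card (Z3 n h).V)) (d : ℕ) (w : ZMod n),
      w.val = (i : ℕ) + d →
      Relation.ReflTransGen ((Z3 n h).stepIn ((Z3 n h).tail L i)) (L i) w := by
    intro i d
    induction d with
    | zero =>
      intro w hw
      have hw' : w = L i := by
        calc w = ((w.val : ℕ) : ZMod n) := (ZMod.natCast_rightInverse w).symm
          _ = (((i : ℕ) : ℕ) : ZMod n) := by rw [hw]; norm_num
          _ = (show ZMod n from L i) := (hL i).symm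
      rw [hw']
    | succ d ih =>
      intro w hw
      have hwlt : w.val < n := ZMod.val_lt w
      have hdlt : (i : ℕ) + d < n := by omega
      set u : ZMod n := (((i : ℕ) + d : ℕ) : ZMod n) with hu_def
      have hu : u.val = (i : ℕ) + d := ZMod.val_cast_of_lt hdlt
      have hw' : w = u + 1 := by
        calc w = ((w.val : ℕ) : ZMod n) := (ZMod.natCast_rightInverse w).symm
          _ = (((i : ℕ) + d + 1 : ℕ) : ZMod n) := by rw [hw]; congr 1
          _ = u + 1 := by rw [hu_def]; push_cast; ring
      have hstep : (Z3 n h).stepIn ((Z3 n h).tail L i) u w := by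
        refine ⟨(htail i u).mpr (by omega), (htail i w).mpr (by omega), ⟨(u, 0), ?_⟩⟩
        show s(u, u + 1) = s(u, w)
        rw [hw']
      exact (ih u hu).tail hstep
  have hcomp : ∀ i : Fin (Fintype.card (Z3 n h).V),
      (Z3 n h).comp ((Z3 n h).tail L i) (L i) = (Z3 n h).tail L i := by
    intro i
    apply Set.Subset.antisymm
    · apply (Z3 n h).comp_subset_aux
      have hilt : (i : ℕ) < n := lt_of_lt_of_eq i.isLt cardV
      exact (htail i (L i)).mpr (le_of_eq (ZMod.val_cast_of_lt hilt).symm)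
    · intro w hw
      have hwval : (i : ℕ) ≤ w.val := (htail i w).mp hw
      exact reach i (w.val - (i : ℕ)) w (by omega)
  -- upper bound: the natural layout has all costs ≤ 4
  have hmem4 : (4 : ℕ) ∈ {k | ∃ L : Fin (Fintype.card (Z3 n h).V) ≃ (Z3 n h).V,
      ∀ i, (Z3 n h).cost L i ≤ k} := by
    refine ⟨L, fun i => ?_⟩
    unfold FinMGraph.cost
    rw [hcomp i]
    apply Z3_cut_le_four n h _ ((((i : ℕ) - 1 : ℕ) : ZMod n)) (((n - 1 : ℕ) : ZMod n))
    rintro ⟨x, jx⟩ ⟨a, b, hab, ha, hb⟩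
    have hxlt : x.val < n := ZMod.val_lt x
    have hx1 : x + 1 = ((x.val + 1 : ℕ) : ZMod n) := by
      conv_lhs => rw [← ZMod.natCast_rightInverse x]
      push_cast; ring
    have hxval : x = ((x.val : ℕ) : ZMod n) := (ZMod.natCast_rightInverse x).symm
    have ha' : (i : ℕ) ≤ a.val := (htail i a).mp ha
    have hb' : b.val < (i : ℕ) := by
      have := (htail i b).not.mp hb
      omega
    have hab' : (x = a ∧ x + 1 = b) ∨ (x = b ∧ x + 1 = a) := Sym2.eq_iff.mp hab
    rcases hab' with ⟨rfl, rfl⟩ | ⟨rfl, hh⟩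
    · -- a = x ∈ X, b = x+1 ∉ X : forces x.val = n-1
      right
      by_cases hcase : x.val + 1 < n
      · exfalso
        have : (x + 1).val = x.val + 1 := by rw [hx1, ZMod.val_cast_of_lt hcase]
        omega
      · have hxn : x.val = n - 1 := by omega
        rw [hxval, hxn]
    · -- b = x ∉ X, a = x+1 ∈ X : forces x.val = i-1
      left
      rw [← hh] at ha'
      by_cases hcase : x.val + 1 < n
      · have : (x + 1).val = x.val + 1 := by rw [hx1, ZMod.val_cast_of_lt hcase]
        have hxi : x.val = (i : ℕ) - 1 := by omega
        rw [hxval, hxi]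
      · exfalso
        have hxn : x.val + 1 = n := by omega
        have : (x + 1).val = 0 := by
          rw [hx1, hxn, ZMod.natCast_self, ZMod.val_zero]
        omega
  -- conclusion
  have hle : (Z3 n h).etw ≤ 4 := Nat.sInf_le hmem4
  have hge : 4 ≤ (Z3 n h).etw := by
    have hne : {k | ∃ L : Fin (Fintype.card (Z3 n h).V) ≃ (Z3 n h).V,
        ∀ i, (Z3 n h).cost L i ≤ k}.Nonempty := ⟨4, hmem4⟩
    obtain ⟨L', hL'⟩ := Nat.sInf_mem hne
    have hpos : 0 < Fintype.card (Z3 n h).V := by omega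
    set ilast : Fin (Fintype.card (Z3 n h).V) :=
      ⟨Fintype.card (Z3 n h).V - 1, by omega⟩ with hilast
    have htail' : (Z3 n h).tail L' ilast = {L' ilast} := by
      ext v
      constructor
      · intro hv
        have h1 : ilast ≤ L'.symm v := hv
        have h2 : (L'.symm v : ℕ) < Fintype.card (Z3 n h).V := (L'.symm v).isLt
        have h3 : L'.symm v = ilast := by
          apply Fin.ext
          rw [Fin.le_def] at h1
          simp only [hilast] at h1 ⊢
          omega
        show v = L' ilast
        rw [← h3, Equiv.apply_symm_apply]
      · rintro rfl
        show ilast ≤ L'.symm (L' ilast)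
        rw [Equiv.symm_apply_apply]
    have hcost : (Z3 n h).cost L' ilast = (Z3 n h).cut ({L' ilast} : Set (Z3 n h).V) := by
      unfold FinMGraph.cost
      rw [htail', (Z3 n h).comp_singleton_aux]
    have h4 : 4 ≤ (Z3 n h).cost L' ilast := by
      rw [hcost]
      exact Z3_four_le_cut_singleton n h (L' ilast)
    exact le_trans h4 (hL' ilast)
  omega
end
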